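/- Let l₁, l₂ ∈ ℕ, m₁, m₂ ∈ ℤ, c ∈ ℚ_p, let k = (k₁,k₂,k₃) ∈ GL₂(ℤ_p)³, and set X := x(d)·(diag(p^{−l₁},1), diag(1,p^{l₂}), [[p^{m₁},c],[0,p^{m₂}]])·(k₁,k₂,k₃) ∈ V. Then for j = 1 and j = 2 one has |d|_p · p^{−2l_j} · m_j(X)² = |P(X)|_p, where m_j(X) denotes the maximum of the p-adic absolute values of the three coordinates of F_j(X). -/

import Mathlib

open Matrix

/-- `2 × 2` matrices over `ℚ_p`. -/
abbrev M2Q (p : ℕ) [Fact p.Prime] := Matrix (Fin 2) (Fin 2) ℚ_[p]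

/-- The right action of triples of (invertible) matrices on `V = M₂(ℚ_p) × M₂(ℚ_p)`:
`(x,y)·(g₁,g₂,g₃) := (a·g₁⁻¹xg₂ + c·g₁⁻¹yg₂, b·g₁⁻¹xg₂ + d·g₁⁻¹yg₂)` where
`g₃ = [[a,b],[c,d]]`. -/
noncomputable def actM {p : ℕ} [Fact p.Prime] (v : M2Q p × M2Q p)
    (g : M2Q p × M2Q p × M2Q p) : M2Q p × M2Q p :=
  ((g.2.2 0 0) • (g.1⁻¹ * v.1 * g.2.1) + (g.2.2 1 0) • (g.1⁻¹ * v.2 * g.2.1),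
   (g.2.2 0 1) • (g.1⁻¹ * v.1 * g.2.1) + (g.2.2 1 1) • (g.1⁻¹ * v.2 * g.2.1))

/-- `P(x,y) = −det(x·y^ι − y·x^ι)`, where `m^ι` is the adjugate. -/
noncomputable def Pq {p : ℕ} [Fact p.Prime] (v : M2Q p × M2Q p) : ℚ_[p] :=
  - (v.1 * v.2.adjugate - v.2 * v.1.adjugate).det

/-- The equivariant map `F₁ : V → ℚ_p³`. -/
noncomputable def Fmap1 {p : ℕ} [Fact p.Prime] (v : M2Q p × M2Q p) :
    ℚ_[p] × ℚ_[p] × ℚ_[p] :=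
  (v.1 0 0 * v.2 0 1 - v.1 0 1 * v.2 0 0,
   (v.1 0 0 * v.2 1 1 - v.1 0 1 * v.2 1 0) + (v.1 1 0 * v.2 0 1 - v.1 1 1 * v.2 0 0),
   v.1 1 0 * v.2 1 1 - v.1 1 1 * v.2 1 0)

/-- The equivariant map `F₂ : V → ℚ_p³`. -/
noncomputable def Fmap2 {p : ℕ} [Fact p.Prime] (v : M2Q p × M2Q p) :
    ℚ_[p] × ℚ_[p] × ℚ_[p] :=
  (v.1 0 0 * v.2 1 0 - v.2 0 0 * v.1 1 0,
   (v.1 0 0 * v.2 1 1 - v.2 0 1 * v.1 1 0) + (v.1 0 1 * v.2 1 0 - v.2 0 0 * v.1 1 1),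
   v.1 0 1 * v.2 1 1 - v.2 0 1 * v.1 1 1)

/-- `m_j(X)`: the maximum of the `p`-adic absolute values of the three coordinates of
`F_j(X)`. -/
noncomputable def mcoord {p : ℕ} [Fact p.Prime] (t : ℚ_[p] × ℚ_[p] × ℚ_[p]) : ℝ :=
  max (max ‖t.1‖ ‖t.2.1‖) ‖t.2.2‖

/-- The coercion of a matrix over `ℤ_p` to a matrix over `ℚ_p`. -/
noncomputable def coeM {p : ℕ} [Fact p.Prime] (k : Matrix (Fin 2) (Fin 2) ℤ_[p]) :
    M2Q p :=
  k.map (fun z => (z : ℚ_[p]))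

section Aux

variable {p : ℕ} [Fact p.Prime]

/-- The symmetric-square action on triples. -/
noncomputable def Sact (h : M2Q p) (t : ℚ_[p] × ℚ_[p] × ℚ_[p]) : ℚ_[p] × ℚ_[p] × ℚ_[p] :=
  (h 0 0 ^ 2 * t.1 + h 0 0 * h 0 1 * t.2.1 + h 0 1 ^ 2 * t.2.2,
   2 * (h 0 0 * h 1 0) * t.1 + (h 0 0 * h 1 1 + h 0 1 * h 1 0) * t.2.1
     + 2 * (h 0 1 * h 1 1) * t.2.2,
   h 1 0 ^ 2 * t.1 + h 1 0 * h 1 1 * t.2.1 + h 1 1 ^ 2 * t.2.2)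

/-- Scaling a triple. -/
noncomputable def scale3 (e : ℚ_[p]) (t : ℚ_[p] × ℚ_[p] × ℚ_[p]) : ℚ_[p] × ℚ_[p] × ℚ_[p] :=
  (e * t.1, e * t.2.1, e * t.2.2)

/-- The discriminant of a triple. -/
noncomputable def dq (t : ℚ_[p] × ℚ_[p] × ℚ_[p]) : ℚ_[p] := t.2.1 ^ 2 - 4 * t.1 * t.2.2

lemma act1_eq (v : M2Q p × M2Q p) (h g2 g3 : M2Q p) :
    Fmap1 (g3 0 0 • (h * v.1 * g2) + g3 1 0 • (h * v.2 * g2),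
           g3 0 1 • (h * v.1 * g2) + g3 1 1 • (h * v.2 * g2))
      = scale3 (g2.det * g3.det) (Sact h (Fmap1 v)) := by
  simp only [Fmap1, Sact, scale3, det_fin_two, Matrix.add_apply, Matrix.smul_apply,
    Matrix.mul_apply, Fin.sum_univ_two, smul_eq_mul, Prod.mk.injEq]
  refine ⟨by ring, by ring, by ring⟩

lemma act2_eq (v : M2Q p × M2Q p) (h g2 g3 : M2Q p) :
    Fmap2 (g3 0 0 • (h * v.1 * g2) + g3 1 0 • (h * v.2 * g2),
           g3 0 1 • (h * v.1 * g2) + g3 1 1 • (h * v.2 * g2))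
      = scale3 (h.det * g3.det) (Sact g2ᵀ (Fmap2 v)) := by
  simp only [Fmap2, Sact, scale3, det_fin_two, Matrix.add_apply, Matrix.smul_apply,
    Matrix.mul_apply, Fin.sum_univ_two, smul_eq_mul, Matrix.transpose_apply, Prod.mk.injEq]
  refine ⟨by ring, by ring, by ring⟩

lemma Pq_eq_disc (v : M2Q p × M2Q p) : Pq v = dq (Fmap1 v) := by
  simp only [Pq, Fmap1, dq, Matrix.adjugate_fin_two, det_fin_two, Matrix.sub_apply,
    Matrix.mul_apply, Fin.sum_univ_two, Matrix.of_apply, Matrix.cons_val', Matrix.cons_val_zero,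
    Matrix.cons_val_one, Matrix.head_cons, Matrix.empty_val', Matrix.cons_val_fin_one,
    Matrix.head_fin_const]
  ring

lemma Scomp (h h' : M2Q p) (t : ℚ_[p] × ℚ_[p] × ℚ_[p]) :
    Sact h' (Sact h t) = Sact (h' * h) t := by
  simp only [Sact, Matrix.mul_apply, Fin.sum_univ_two, Prod.mk.injEq]
  refine ⟨by ring, by ring, by ring⟩

lemma Sone (t : ℚ_[p] × ℚ_[p] × ℚ_[p]) : Sact (1 : M2Q p) t = t := by
  simp [Sact, Matrix.one_apply]

lemma dq_Sact (h : M2Q p) (t : ℚ_[p] × ℚ_[p] × ℚ_[p]) :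
    dq (Sact h t) = h.det ^ 2 * dq t := by
  simp only [dq, Sact, det_fin_two]; ring

lemma dq_scale3 (e : ℚ_[p]) (t : ℚ_[p] × ℚ_[p] × ℚ_[p]) :
    dq (scale3 e t) = e ^ 2 * dq t := by
  simp only [dq, scale3]; ring

lemma mcoord_scale3 (e : ℚ_[p]) (t : ℚ_[p] × ℚ_[p] × ℚ_[p]) :
    mcoord (scale3 e t) = ‖e‖ * mcoord t := by
  simp only [mcoord, scale3, norm_mul]
  rw [← mul_max_of_nonneg _ _ (norm_nonneg e), ← mul_max_of_nonneg _ _ (norm_nonneg e)]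

lemma tri_bound (a b c : ℚ_[p]) (A : ℝ) (ha : ‖a‖ ≤ A) (hb : ‖b‖ ≤ A) (hc : ‖c‖ ≤ A) :
    ‖a + b + c‖ ≤ A :=
  le_trans (Padic.nonarchimedean _ _)
    (max_le (le_trans (Padic.nonarchimedean _ _) (max_le ha hb)) hc)

lemma norm_two_le : ‖(2 : ℚ_[p])‖ ≤ 1 := by
  have := Padic.norm_int_le_one (p := p) 2
  simpa using this

lemma mcoord_Sact_le (h : M2Q p) (hb : ∀ i j, ‖h i j‖ ≤ 1) (t : ℚ_[p] × ℚ_[p] × ℚ_[p]) :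
    mcoord (Sact h t) ≤ mcoord t := by
  have h1 : ‖t.1‖ ≤ mcoord t := le_trans (le_max_left _ _) (le_max_left _ _)
  have h2 : ‖t.2.1‖ ≤ mcoord t := le_trans (le_max_right _ _) (le_max_left _ _)
  have h3 : ‖t.2.2‖ ≤ mcoord t := le_max_right _ _
  have key : ∀ a b : ℚ_[p], ‖a‖ ≤ 1 → ‖b‖ ≤ mcoord t → ‖a * b‖ ≤ mcoord t := by
    intro a b ha hbb
    rw [norm_mul]
    calc ‖a‖ * ‖b‖ ≤ 1 * mcoord t := mul_le_mul ha hbb (norm_nonneg _) zero_le_one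
      _ = mcoord t := one_mul _
  have hmul : ∀ i j i' j' : Fin 2, ‖h i j * h i' j'‖ ≤ 1 := by
    intro i j i' j'
    rw [norm_mul]
    calc ‖h i j‖ * ‖h i' j'‖ ≤ 1 * 1 := mul_le_mul (hb i j) (hb i' j') (norm_nonneg _) zero_le_one
      _ = 1 := one_mul 1
  have h2m : ∀ i j i' j' : Fin 2, ‖2 * (h i j * h i' j')‖ ≤ 1 := by
    intro i j i' j'
    rw [norm_mul]
    calc ‖(2:ℚ_[p])‖ * ‖h i j * h i' j'‖ ≤ 1 * 1 :=
          mul_le_mul norm_two_le (hmul i j i' j') (norm_nonneg _) zero_le_one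
      _ = 1 := one_mul 1
  refine max_le (max_le ?_ ?_) ?_
  · exact tri_bound _ _ _ _ (key _ _ (by rw [sq]; exact hmul 0 0 0 0) h1)
      (key _ _ (hmul 0 0 0 1) h2) (key _ _ (by rw [sq]; exact hmul 0 1 0 1) h3)
  · refine tri_bound _ _ _ _ (key _ _ (h2m 0 0 1 0) h1) (key _ _ ?_ h2) (key _ _ (h2m 0 1 1 1) h3)
    exact le_trans (Padic.nonarchimedean _ _) (max_le (hmul 0 0 1 1) (hmul 0 1 1 0))
  · exact tri_bound _ _ _ _ (key _ _ (by rw [sq]; exact hmul 1 0 1 0) h1)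
      (key _ _ (hmul 1 0 1 1) h2) (key _ _ (by rw [sq]; exact hmul 1 1 1 1) h3)

lemma mcoord_Sact_eq (h h' : M2Q p) (hb : ∀ i j, ‖h i j‖ ≤ 1) (hb' : ∀ i j, ‖h' i j‖ ≤ 1)
    (hinv : h' * h = 1) (t : ℚ_[p] × ℚ_[p] × ℚ_[p]) :
    mcoord (Sact h t) = mcoord t := by
  refine le_antisymm (mcoord_Sact_le h hb t) ?_
  have := mcoord_Sact_le h' hb' (Sact h t)
  rwa [Scomp, hinv, Sone] at this

lemma coeM_mul (A B : Matrix (Fin 2) (Fin 2) ℤ_[p]) : coeM (A * B) = coeM A * coeM B := by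
  ext i j
  simp [coeM, Matrix.mul_apply, Fin.sum_univ_two]

lemma coeM_one : coeM (1 : Matrix (Fin 2) (Fin 2) ℤ_[p]) = 1 := by
  ext i j
  simp [coeM, Matrix.one_apply, apply_ite (fun z : ℤ_[p] => (z : ℚ_[p]))]

lemma coeM_entry_norm (A : Matrix (Fin 2) (Fin 2) ℤ_[p]) (i j : Fin 2) :
    ‖coeM A i j‖ ≤ 1 := by
  simp only [coeM, Matrix.map_apply]
  rw [PadicInt.padic_norm_e_of_padicInt]
  exact PadicInt.norm_le_one _

lemma coeM_gl_mul_inv (k : GL (Fin 2) ℤ_[p]) :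
    coeM (k : Matrix (Fin 2) (Fin 2) ℤ_[p]) *
      coeM ((k⁻¹ : GL (Fin 2) ℤ_[p]) : Matrix (Fin 2) (Fin 2) ℤ_[p]) = 1 := by
  rw [← coeM_mul]
  have : (k : Matrix (Fin 2) (Fin 2) ℤ_[p]) *
      ((k⁻¹ : GL (Fin 2) ℤ_[p]) : Matrix (Fin 2) (Fin 2) ℤ_[p]) = 1 := k.mul_inv
  rw [this, coeM_one]

lemma inv_coeM_gl (k : GL (Fin 2) ℤ_[p]) :
    (coeM (k : Matrix (Fin 2) (Fin 2) ℤ_[p]))⁻¹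
      = coeM ((k⁻¹ : GL (Fin 2) ℤ_[p]) : Matrix (Fin 2) (Fin 2) ℤ_[p]) :=
  Matrix.inv_eq_right_inv (coeM_gl_mul_inv k)

lemma norm_det_coeM (k : GL (Fin 2) ℤ_[p]) :
    ‖(coeM (k : Matrix (Fin 2) (Fin 2) ℤ_[p])).det‖ = 1 := by
  have hu : IsUnit ((k : Matrix (Fin 2) (Fin 2) ℤ_[p])).det :=
    (Matrix.isUnit_iff_isUnit_det _).mp k.isUnit
  have : (coeM (k : Matrix (Fin 2) (Fin 2) ℤ_[p])).det
      = (((k : Matrix (Fin 2) (Fin 2) ℤ_[p])).det : ℚ_[p]) := by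
    simp [coeM, det_fin_two, Matrix.map_apply]
  rw [this, PadicInt.padic_norm_e_of_padicInt]
  exact PadicInt.isUnit_iff.mp hu

end Aux

set_option maxHeartbeats 1000000 in
/-- for `X = x(d)·(diag(p^{−l₁},1), diag(1,p^{l₂}), [[p^{m₁},c],[0,p^{m₂}]])·k`
with `k ∈ GL₂(ℤ_p)³`, one has `|d|·p^{−2l_j}·m_j(X)² = |P(X)|` for `j = 1, 2`. -/
theorem stmt15 (p : ℕ) [Fact p.Prime] (hp : Odd p) (d : ℤ_[p])
    (hd : ‖(d : ℚ_[p])‖ = 1 ∨ ‖(d : ℚ_[p])‖ = (p : ℝ)⁻¹)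
    (l₁ l₂ : ℕ) (m₁ m₂ : ℤ) (c : ℚ_[p]) (k₁ k₂ k₃ : GL (Fin 2) ℤ_[p])
    (X : M2Q p × M2Q p)
    (hX : X = actM
      (actM ((1 : M2Q p), !![0, (d : ℚ_[p]); 1, 0])
        (!![(p : ℚ_[p]) ^ (-(l₁ : ℤ)), 0; 0, 1],
         !![1, 0; 0, (p : ℚ_[p]) ^ (l₂ : ℕ)],
         !![(p : ℚ_[p]) ^ m₁, c; 0, (p : ℚ_[p]) ^ m₂]))
      (coeM (k₁ : Matrix (Fin 2) (Fin 2) ℤ_[p]),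
       coeM (k₂ : Matrix (Fin 2) (Fin 2) ℤ_[p]),
       coeM (k₃ : Matrix (Fin 2) (Fin 2) ℤ_[p]))) :
    ‖(d : ℚ_[p])‖ * ((p : ℝ) ^ (2 * l₁))⁻¹ * mcoord (Fmap1 X) ^ 2 = ‖Pq X‖ ∧
    ‖(d : ℚ_[p])‖ * ((p : ℝ) ^ (2 * l₂))⁻¹ * mcoord (Fmap2 X) ^ 2 = ‖Pq X‖ := by
  have hpp : p.Prime := Fact.out
  have hp0 : ((p : ℚ_[p])) ≠ 0 := by
    exact_mod_cast (Nat.cast_ne_zero (R := ℚ_[p])).mpr hpp.ne_zero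
  set A : ℚ_[p] := (p : ℚ_[p]) ^ m₁ with hA
  set B : ℚ_[p] := (p : ℚ_[p]) ^ m₂ with hB
  set Q1 : ℚ_[p] := (p : ℚ_[p]) ^ (l₁ : ℤ) with hQ1
  set L2 : ℚ_[p] := (p : ℚ_[p]) ^ (l₂ : ℕ) with hL2
  -- inverse of g₁
  have hPQ : (p : ℚ_[p]) ^ (-(l₁ : ℤ)) * Q1 = 1 := by
    rw [hQ1, ← zpow_add₀ hp0]; norm_num
  have hPQ2 : ((p : ℚ_[p]) ^ l₁)⁻¹ * Q1 = 1 := by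
    rw [hQ1, zpow_natCast]
    exact inv_mul_cancel₀ (pow_ne_zero _ hp0)
  have hg1inv : (!![(p : ℚ_[p]) ^ (-(l₁ : ℤ)), 0; 0, 1])⁻¹ = !![Q1, 0; 0, 1] := by
    apply Matrix.inv_eq_right_inv
    rw [Matrix.mul_fin_two, Matrix.one_fin_two]
    norm_num [hPQ, hPQ2]
  -- explicit computation of Y
  set Y₁ : M2Q p := !![A * Q1, 0; 0, A * L2] with hY₁
  set Y₂ : M2Q p := !![c * Q1, B * (Q1 * (d : ℚ_[p]) * L2); B, c * L2] with hY₂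
  have hY : actM ((1 : M2Q p), !![0, (d : ℚ_[p]); 1, 0])
      (!![(p : ℚ_[p]) ^ (-(l₁ : ℤ)), 0; 0, 1],
       !![1, 0; 0, (p : ℚ_[p]) ^ (l₂ : ℕ)],
       !![(p : ℚ_[p]) ^ m₁, c; 0, (p : ℚ_[p]) ^ m₂]) = (Y₁, Y₂) := by
    simp only [actM, hg1inv]
    refine Prod.ext ?_ ?_ <;>
      · ext i j
        fin_cases i <;> fin_cases j <;>
          · simp [hY₁, hY₂, hA, hB, hL2, Matrix.mul_apply, Fin.sum_univ_two]
            try ring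
  rw [hY] at hX
  simp only [actM] at hX
  rw [inv_coeM_gl] at hX
  -- equivariance
  have hF1X : Fmap1 X = scale3 ((coeM (k₂ : Matrix (Fin 2) (Fin 2) ℤ_[p])).det *
      (coeM (k₃ : Matrix (Fin 2) (Fin 2) ℤ_[p])).det)
      (Sact (coeM ((k₁⁻¹ : GL (Fin 2) ℤ_[p]) : Matrix (Fin 2) (Fin 2) ℤ_[p])) (Fmap1 (Y₁, Y₂))) := by
    rw [hX]; exact act1_eq (Y₁, Y₂) _ _ _
  have hF2X : Fmap2 X = scale3 ((coeM ((k₁⁻¹ : GL (Fin 2) ℤ_[p]) : Matrix (Fin 2) (Fin 2) ℤ_[p])).det *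
      (coeM (k₃ : Matrix (Fin 2) (Fin 2) ℤ_[p])).det)
      (Sact (coeM (k₂ : Matrix (Fin 2) (Fin 2) ℤ_[p]))ᵀ (Fmap2 (Y₁, Y₂))) := by
    rw [hX]; exact act2_eq (Y₁, Y₂) _ _ _
  -- explicit values of Fmap1 Y and Fmap2 Y
  have htY1 : Fmap1 (Y₁, Y₂) = (A * Q1 * (B * (Q1 * (d : ℚ_[p]) * L2)), 0, -(A * L2 * B)) := by
    simp only [Fmap1, hY₁, hY₂, Prod.mk.injEq]
    norm_num [Matrix.cons_val_zero, Matrix.cons_val_one]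
    ring
  have htY2 : Fmap2 (Y₁, Y₂) = (A * Q1 * B, 0, -(B * (Q1 * (d : ℚ_[p]) * L2) * (A * L2))) := by
    simp only [Fmap2, hY₁, hY₂, Prod.mk.injEq]
    norm_num [Matrix.cons_val_zero, Matrix.cons_val_one]
    ring
  -- norms
  have hdle : ‖(d : ℚ_[p])‖ ≤ 1 := by
    rw [PadicInt.padic_norm_e_of_padicInt]; exact PadicInt.norm_le_one _
  have hQ1le : ‖Q1‖ ≤ 1 := by
    rw [hQ1, Padic.norm_p_zpow]
    apply zpow_le_one_of_nonpos₀
    · exact_mod_cast hpp.one_lt.le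
    · simp
  have hL2le : ‖L2‖ ≤ 1 := by
    rw [hL2, Padic.norm_p_pow]
    apply zpow_le_one_of_nonpos₀
    · exact_mod_cast hpp.one_lt.le
    · simp
  -- ‖4‖ = 1
  have hp2 : p ≠ 2 := by
    rintro rfl
    norm_num [Nat.odd_iff] at hp
  have h2norm : ‖(2 : ℚ_[p])‖ = 1 := by
    refine le_antisymm norm_two_le (not_lt.mp fun hlt => ?_)
    have hdvd : (p : ℤ) ∣ 2 := by
      have := (Padic.norm_intCast_lt_one_iff (p := p) (k := 2)).mp (by exact_mod_cast hlt)
      exact_mod_cast this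
    have hpd : p ∣ 2 := by exact_mod_cast hdvd
    exact hp2 ((Nat.prime_dvd_prime_iff_eq hpp Nat.prime_two).mp hpd)
  have h4norm : ‖(4 : ℚ_[p])‖ = 1 := by
    have h4 : (4 : ℚ_[p]) = 2 * 2 := by norm_num
    rw [h4, norm_mul, h2norm, one_mul]
  -- the common right-hand side
  have hPqX : ‖Pq X‖ = ‖Q1‖ ^ 2 * ‖(d : ℚ_[p])‖ * (‖A‖ * ‖B‖ * ‖L2‖) ^ 2 := by
    have hval : Pq X = ((coeM (k₂ : Matrix (Fin 2) (Fin 2) ℤ_[p])).det *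
        (coeM (k₃ : Matrix (Fin 2) (Fin 2) ℤ_[p])).det) ^ 2 *
        ((coeM ((k₁⁻¹ : GL (Fin 2) ℤ_[p]) : Matrix (Fin 2) (Fin 2) ℤ_[p])).det) ^ 2 *
        (4 * (A * Q1 * (B * (Q1 * (d : ℚ_[p]) * L2))) * (A * L2 * B)) := by
      rw [Pq_eq_disc, hF1X, dq_scale3, dq_Sact, htY1]
      simp only [dq]
      ring
    rw [hval]
    simp only [norm_mul, norm_pow, norm_det_coeM, h4norm]
    ring
  constructor
  · -- j = 1
    have hm1 : mcoord (Fmap1 X) = ‖A‖ * ‖L2‖ * ‖B‖ := by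
      rw [hF1X, mcoord_scale3,
        mcoord_Sact_eq _ (coeM (k₁ : Matrix (Fin 2) (Fin 2) ℤ_[p]))
          (coeM_entry_norm _) (coeM_entry_norm _) (coeM_gl_mul_inv k₁), htY1]
      rw [norm_mul, norm_det_coeM, norm_det_coeM, one_mul, one_mul]
      simp only [mcoord, norm_zero, norm_neg, norm_mul]
      rw [max_eq_left (mul_nonneg (mul_nonneg (norm_nonneg _) (norm_nonneg _))
        (mul_nonneg (norm_nonneg _) (mul_nonneg (mul_nonneg (norm_nonneg _) (norm_nonneg _))
          (norm_nonneg _))))]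
      apply max_eq_right
      have hfac : ‖Q1‖ * (‖Q1‖ * ‖(d : ℚ_[p])‖) ≤ 1 := by
        have h3 := norm_nonneg Q1; have h5 := norm_nonneg ((d : ℚ_[p]))
        nlinarith
      calc ‖A‖ * ‖Q1‖ * (‖B‖ * (‖Q1‖ * ‖(d : ℚ_[p])‖ * ‖L2‖))
          = (‖A‖ * ‖L2‖ * ‖B‖) * (‖Q1‖ * (‖Q1‖ * ‖(d : ℚ_[p])‖)) := by ring
        _ ≤ (‖A‖ * ‖L2‖ * ‖B‖) * 1 := by
            apply mul_le_mul_of_nonneg_left hfac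
            exact mul_nonneg (mul_nonneg (norm_nonneg _) (norm_nonneg _)) (norm_nonneg _)
        _ = ‖A‖ * ‖L2‖ * ‖B‖ := mul_one _
    rw [hm1, hPqX]
    have hpow : ((p : ℝ) ^ (2 * l₁))⁻¹ = ‖Q1‖ ^ 2 := by
      rw [hQ1, Padic.norm_p_zpow, mul_comm 2 l₁, pow_mul, ← inv_pow]
      congr 1
      rw [_root_.zpow_neg, zpow_natCast]
    rw [hpow]
    ring
  · -- j = 2
    have hm2 : mcoord (Fmap2 X) = ‖A‖ * ‖Q1‖ * ‖B‖ := by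
      have hbT : ∀ i j, ‖(coeM (k₂ : Matrix (Fin 2) (Fin 2) ℤ_[p]))ᵀ i j‖ ≤ 1 := by
        intro i j; rw [Matrix.transpose_apply]; exact coeM_entry_norm _ _ _
      have hbT' : ∀ i j, ‖(coeM ((k₂⁻¹ : GL (Fin 2) ℤ_[p]) : Matrix (Fin 2) (Fin 2) ℤ_[p]))ᵀ i j‖ ≤ 1 := by
        intro i j; rw [Matrix.transpose_apply]; exact coeM_entry_norm _ _ _
      have hinvT : (coeM ((k₂⁻¹ : GL (Fin 2) ℤ_[p]) : Matrix (Fin 2) (Fin 2) ℤ_[p]))ᵀ *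
          (coeM (k₂ : Matrix (Fin 2) (Fin 2) ℤ_[p]))ᵀ = 1 := by
        rw [← Matrix.transpose_mul, coeM_gl_mul_inv, Matrix.transpose_one]
      rw [hF2X, mcoord_scale3, mcoord_Sact_eq _ _ hbT hbT' hinvT, htY2]
      rw [norm_mul, norm_det_coeM, norm_det_coeM, one_mul, one_mul]
      simp only [mcoord, norm_zero, norm_neg, norm_mul]
      rw [max_eq_left (mul_nonneg (mul_nonneg (norm_nonneg _) (norm_nonneg _)) (norm_nonneg _))]
      apply max_eq_left
      have hfac : ‖(d : ℚ_[p])‖ * (‖L2‖ * ‖L2‖) ≤ 1 := by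
        have h4 := norm_nonneg L2; have h5 := norm_nonneg ((d : ℚ_[p]))
        nlinarith
      calc ‖B‖ * (‖Q1‖ * ‖(d : ℚ_[p])‖ * ‖L2‖) * (‖A‖ * ‖L2‖)
          = (‖A‖ * ‖Q1‖ * ‖B‖) * (‖(d : ℚ_[p])‖ * (‖L2‖ * ‖L2‖)) := by ring
        _ ≤ (‖A‖ * ‖Q1‖ * ‖B‖) * 1 := by
            apply mul_le_mul_of_nonneg_left hfac
            exact mul_nonneg (mul_nonneg (norm_nonneg _) (norm_nonneg _)) (norm_nonneg _)
        _ = ‖A‖ * ‖Q1‖ * ‖B‖ := mul_one _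
    rw [hm2, hPqX]
    have hpow : ((p : ℝ) ^ (2 * l₂))⁻¹ = ‖L2‖ ^ 2 := by
      rw [hL2, Padic.norm_p_pow, mul_comm 2 l₂, pow_mul, ← inv_pow]
      congr 1
      rw [_root_.zpow_neg, zpow_natCast]
    rw [hpow]
    ring
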